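/- Let X be a finite set, P a probability distribution on X with full support, ρ > 0, α = 1/(1+ρ), and L : X → ℕ an arbitrary length function. Define Q_L(x) = 2^{-L(x)/α} / ∑_{x'} 2^{-L(x')/α} and η = ∑_{x} 2^{-L(x)}. Then (1/ρ)·log(∑_x P(x)·2^{ρ·L(x)}) = H_α(P) + I_α(P, Q_L) − log η. -/

import Mathlib

open Real Finset

theorem stmt8 {X : Type*} [Fintype X] [Nonempty X]
    (P : X → ℝ) (hP : ∀ x, 0 < P x) (hPsum : ∑ x, P x = 1)
    (ρ : ℝ) (hρ : 0 < ρ) (α : ℝ) (hα : α = 1 / (1 + ρ))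
    (L : X → ℕ)
    (QL : X → ℝ)
    (hQL : ∀ x, QL x = (2 : ℝ) ^ (-(L x : ℝ) / α) /
        ∑ x', (2 : ℝ) ^ (-(L x' : ℝ) / α))
    (η : ℝ) (hη : η = ∑ x, (2 : ℝ) ^ (-(L x : ℝ))) :
    (1 / ρ) * Real.logb 2 (∑ x, P x * (2 : ℝ) ^ (ρ * (L x : ℝ))) =
      (1 / (1 - α)) * Real.logb 2 (∑ x, P x ^ α)
      + ((α / (1 - α)) * Real.logb 2
          (∑ x, P x * (∑ x', (QL x' / QL x) ^ α) ^ ((1 - α) / α))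
        - (1 / (1 - α)) * Real.logb 2 (∑ x, P x ^ α))
      - Real.logb 2 η := by
  have h1ρ : (0:ℝ) < 1 + ρ := by linarith
  have hα0 : 0 < α := by rw [hα]; positivity
  have hαinv : 1 / α = 1 + ρ := by rw [hα]; field_simp
  have hratio : (1 - α) / α = ρ := by
    rw [hα]; field_simp; ring
  have hαρ : α / (1 - α) = 1 / ρ := by
    rw [hα]; rw [show 1 - 1/(1+ρ) = ρ/(1+ρ) by field_simp; ring]
    field_simp
  -- positivity facts
  have hD : (0:ℝ) < ∑ x', (2 : ℝ) ^ (-(L x' : ℝ) / α) := by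
    apply Finset.sum_pos (fun x _ => by positivity) Finset.univ_nonempty
  have hη0 : 0 < η := by
    rw [hη]; exact Finset.sum_pos (fun x _ => by positivity) Finset.univ_nonempty
  -- ratio simplification
  have hrat : ∀ x, (∑ x', (QL x' / QL x) ^ α) = (2:ℝ) ^ ((L x : ℝ)) * η := by
    intro x
    have : ∀ x', (QL x' / QL x) ^ α = (2:ℝ) ^ ((L x : ℝ)) * (2:ℝ) ^ (-(L x' : ℝ)) := by
      intro x'
      have hx : QL x' / QL x = (2:ℝ) ^ ((-(L x' : ℝ) + (L x : ℝ)) / α) := by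
        rw [hQL x', hQL x]
        rw [div_div_div_comm, div_self (ne_of_gt hD), div_one]
        rw [← Real.rpow_sub (by norm_num)]
        ring_nf
      rw [hx, ← Real.rpow_mul (by norm_num), div_mul_cancel₀ _ (ne_of_gt hα0),
        Real.rpow_add (by norm_num)]
      ring
    simp_rw [this, ← Finset.mul_sum, ← hη]
  have hterm : ∀ x, (∑ x', (QL x' / QL x) ^ α) ^ ((1 - α) / α)
      = η ^ ρ * (2:ℝ) ^ (ρ * (L x : ℝ)) := by
    intro x
    rw [hrat x, hratio, Real.mul_rpow (by positivity) (le_of_lt hη0),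
      ← Real.rpow_mul (by norm_num)]
    ring_nf
  have hS : 0 < ∑ x, P x * (2 : ℝ) ^ (ρ * (L x : ℝ)) :=
    Finset.sum_pos (fun x _ => by have := hP x; positivity) Finset.univ_nonempty
  have hmain : (∑ x, P x * (∑ x', (QL x' / QL x) ^ α) ^ ((1 - α) / α))
      = η ^ ρ * ∑ x, P x * (2 : ℝ) ^ (ρ * (L x : ℝ)) := by
    simp_rw [hterm]
    rw [Finset.mul_sum]
    congr 1; ext x; ring
  rw [hmain, hαρ, Real.logb_mul (by positivity) (ne_of_gt hS),
    Real.logb_rpow_eq_mul_logb_of_pos hη0]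
  field_simp
  ring
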